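/- Fix B > 0 and let R = Q∘K be an RNN with output dimension 1 and hidden state size m. Then there exists an RNN R' with the same input dimension, output dimension 1, and hidden state size m + 11 such that for all x ∈ ℝ^{d_in}, all integers k >= 2, and all l ∈ {0,...,2^k - 1}: (R' D x)[2^k - 1 + l] = C((R D x)[2^k - 2], -B, B), where C(y, A, B) denotes the clipping operator equal to A if y <= A, to B if y >= B, and to y otherwise. -/
import Mathlib


/-- ReLU applied componentwise. -/
noncomputable def relu {n : Type*} (v : n → ℝ) : n → ℝ := fun i => max 0 (v i)

/-- An RNN with input index type `ι`, hidden state index type `κ`, output index type `ω`,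
parametrized by weights `A_h, A_x, A_o, b_h, b_o`. -/
structure RNN (ι κ ω : Type) where
  Ah : Matrix κ κ ℝ
  Ax : Matrix κ ι ℝ
  Ao : Matrix ω κ ℝ
  bh : κ → ℝ
  bo : ω → ℝ

/-- Hidden state sequence `(K 𝒟 x)[t]` for the input sequence `(𝒟 x)[t] = x·1{t=0}`,
with the convention `h[-1] = 0`:  `h[0] = ρ(A_x x + b_h)`, `h[t+1] = ρ(A_h h[t] + b_h)`. -/
noncomputable def RNN.hid {ι κ ω : Type} [Fintype ι] [Fintype κ] (R : RNN ι κ ω)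
    (x : ι → ℝ) : ℕ → κ → ℝ
  | 0 => relu (R.Ax.mulVec x + R.bh)
  | t + 1 => relu (R.Ah.mulVec (RNN.hid R x t) + R.bh)

/-- Output sequence `(R 𝒟 x)[t] = A_o h[t] + b_o`. -/
noncomputable def RNN.out {ι κ ω : Type} [Fintype ι] [Fintype κ] (R : RNN ι κ ω)
    (x : ι → ℝ) (t : ℕ) : ω → ℝ :=
  R.Ao.mulVec (R.hid x t) + R.bo

/-- The clipping operator `C(y, A, B)`: equals `A` if `y ≤ A`, `B` if `y ≥ B`,
and `y` otherwise. -/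
noncomputable def clip (y A B : ℝ) : ℝ := if y ≤ A then A else if B ≤ y then B else y

/-- Lemma (output holding / clipping): fix `B > 0` and let `R` be an RNN with output
dimension 1 and hidden state size `m`.  There is an RNN `R'` with the same input
dimension, output dimension 1, and hidden state size `m + 11` such that for all inputs
`x`, all integers `k ≥ 2`, and all `ℓ ∈ {0,…,2^k − 1}`:
`(R' 𝒟 x)[2^k − 1 + ℓ] = C((R 𝒟 x)[2^k − 2], −B, B)`. -/
@[simp] lemma vecEval0 {α : Type*} (a0 a1 a2 a3 a4 a5 a6 a7 a8 a9 a10 : α) :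
    (![a0,a1,a2,a3,a4,a5,a6,a7,a8,a9,a10] : Fin 11 → α) 0 = a0 := rfl
@[simp] lemma vecEval1 {α : Type*} (a0 a1 a2 a3 a4 a5 a6 a7 a8 a9 a10 : α) :
    (![a0,a1,a2,a3,a4,a5,a6,a7,a8,a9,a10] : Fin 11 → α) 1 = a1 := rfl
@[simp] lemma vecEval2 {α : Type*} (a0 a1 a2 a3 a4 a5 a6 a7 a8 a9 a10 : α) :
    (![a0,a1,a2,a3,a4,a5,a6,a7,a8,a9,a10] : Fin 11 → α) 2 = a2 := rfl
@[simp] lemma vecEval3 {α : Type*} (a0 a1 a2 a3 a4 a5 a6 a7 a8 a9 a10 : α) :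
    (![a0,a1,a2,a3,a4,a5,a6,a7,a8,a9,a10] : Fin 11 → α) 3 = a3 := rfl
@[simp] lemma vecEval4 {α : Type*} (a0 a1 a2 a3 a4 a5 a6 a7 a8 a9 a10 : α) :
    (![a0,a1,a2,a3,a4,a5,a6,a7,a8,a9,a10] : Fin 11 → α) 4 = a4 := rfl
@[simp] lemma vecEval5 {α : Type*} (a0 a1 a2 a3 a4 a5 a6 a7 a8 a9 a10 : α) :
    (![a0,a1,a2,a3,a4,a5,a6,a7,a8,a9,a10] : Fin 11 → α) 5 = a5 := rfl
@[simp] lemma vecEval6 {α : Type*} (a0 a1 a2 a3 a4 a5 a6 a7 a8 a9 a10 : α) :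
    (![a0,a1,a2,a3,a4,a5,a6,a7,a8,a9,a10] : Fin 11 → α) 6 = a6 := rfl
@[simp] lemma vecEval7 {α : Type*} (a0 a1 a2 a3 a4 a5 a6 a7 a8 a9 a10 : α) :
    (![a0,a1,a2,a3,a4,a5,a6,a7,a8,a9,a10] : Fin 11 → α) 7 = a7 := rfl
@[simp] lemma vecEval8 {α : Type*} (a0 a1 a2 a3 a4 a5 a6 a7 a8 a9 a10 : α) :
    (![a0,a1,a2,a3,a4,a5,a6,a7,a8,a9,a10] : Fin 11 → α) 8 = a8 := rfl
@[simp] lemma vecEval9 {α : Type*} (a0 a1 a2 a3 a4 a5 a6 a7 a8 a9 a10 : α) :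
    (![a0,a1,a2,a3,a4,a5,a6,a7,a8,a9,a10] : Fin 11 → α) 9 = a9 := rfl
@[simp] lemma vecEval10 {α : Type*} (a0 a1 a2 a3 a4 a5 a6 a7 a8 a9 a10 : α) :
    (![a0,a1,a2,a3,a4,a5,a6,a7,a8,a9,a10] : Fin 11 → α) 10 = a10 := rfl

theorem sum11 {M : Type*} [AddCommMonoid M] (f : Fin 11 → M) :
    ∑ j, f j = f 0 + f 1 + f 2 + f 3 + f 4 + f 5 + f 6 + f 7 + f 8 + f 9 + f 10 := by
  simp only [Fin.sum_univ_succ, Fin.sum_univ_zero, add_zero,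
    show (Fin.succ 0 : Fin 11) = 1 from rfl,
    show ((1:Fin 11).succ) = 2 from rfl,
    show ((2:Fin 11).succ) = 3 from rfl,
    show ((3:Fin 11).succ) = 4 from rfl,
    show ((4:Fin 11).succ) = 5 from rfl,
    show ((5:Fin 11).succ) = 6 from rfl,
    show ((6:Fin 11).succ) = 7 from rfl,
    show ((7:Fin 11).succ) = 8 from rfl,
    show ((8:Fin 11).succ) = 9 from rfl,
    show ((9:Fin 11).succ) = 10 from rfl]
  abel

namespace Stmt18Aux

/-- extra-block recurrent weights; neuron order: o,a,u,s,s2,z,v1,v2,d2,G,spare -/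
noncomputable def W (B : ℝ) : Fin 11 → Fin 11 → ℝ :=
  ![![0,0,0,0,0,0,0,0,0,0,0],
    ![-1, 1/2, 0,0,0,0,0,0,0,0,0],
    ![-(1/2), 0, 2, -6, 0, 1, 0,0,0,0,0],
    ![0,0,2,0,0,0,0,0,0,0,0],
    ![0,0,2,0,0,0,0,0,0,0,0],
    ![0,8,0,0,4,0,0,0,0,0,0],
    ![0,0,0,B,-(3/2*B),0,0,0,0,0,0],
    ![0,0,0,-B,3/2*B,0,0,0,0,0,0],
    ![0,0,0,0,B,0,1,-1,0,0,0],
    ![0,0,0,-(2*B),3*B,0,0,0,1,1,0],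
    ![0,0,0,0,0,0,0,0,0,0,0]]

noncomputable def simRead : Fin 11 → ℝ := ![0,0,0,0,0,0,1,1,0,0,0]

noncomputable def bext (B bo : ℝ) : Fin 11 → ℝ := ![1,1,1/2,-1,-2,-8,bo,bo,-(2*B),0,0]

noncomputable def outRow : Fin 11 → ℝ := ![0,0,0,0,0,0,1,-1,1,1,0]

variable {din mh : ℕ}

noncomputable def S (B : ℝ) (R : RNN (Fin din) (Fin mh) (Fin 1)) :
    RNN (Fin din) (Fin mh ⊕ Fin 11) (Fin 1) where
  Ah := fun i j =>
    match i, j with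
    | .inl i, .inl j => R.Ah i j
    | .inl _, .inr _ => 0
    | .inr i, .inl j => simRead i * R.Ao 0 j
    | .inr i, .inr j => W B i j
  Ax := fun i j => match i with | .inl i => R.Ax i j | .inr _ => 0
  Ao := fun _ j => match j with | .inl _ => 0 | .inr j => outRow j
  bh := Sum.elim R.bh (bext B (R.bo 0))
  bo := fun _ => -B

variable (B : ℝ) (R : RNN (Fin din) (Fin mh) (Fin 1)) (x : Fin din → ℝ)

@[simp] lemma S_Ah_ll (i j) : (S B R).Ah (.inl i) (.inl j) = R.Ah i j := rfl
@[simp] lemma S_Ah_lr (i j) : (S B R).Ah (.inl i) (.inr j) = 0 := rfl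
@[simp] lemma S_Ah_rl (i j) : (S B R).Ah (.inr i) (.inl j) = simRead i * R.Ao 0 j := rfl
@[simp] lemma S_Ah_rr (i j) : (S B R).Ah (.inr i) (.inr j) = W B i j := rfl
@[simp] lemma S_Ax_l (i j) : (S B R).Ax (.inl i) j = R.Ax i j := rfl
@[simp] lemma S_Ax_r (i j) : (S B R).Ax (.inr i) j = 0 := rfl
@[simp] lemma S_Ao_l (o i) : (S B R).Ao o (.inl i) = 0 := rfl
@[simp] lemma S_Ao_r (o i) : (S B R).Ao o (.inr i) = outRow i := rfl
@[simp] lemma S_bh_l (i) : (S B R).bh (.inl i) = R.bh i := rfl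
@[simp] lemma S_bh_r (i) : (S B R).bh (.inr i) = bext B (R.bo 0) i := rfl
@[simp] lemma S_bo (o) : (S B R).bo o = -B := rfl

/-- the simulation block reproduces R's hidden state -/
lemma sim : ∀ t i, (S B R).hid x t (Sum.inl i) = R.hid x t i := by
  intro t
  induction t with
  | zero =>
    intro i
    simp only [RNN.hid, relu, Matrix.mulVec, dotProduct, Pi.add_apply, S_Ax_l, S_bh_l]
  | succ t ih =>
    intro i
    simp only [RNN.hid, relu, Matrix.mulVec, dotProduct, Pi.add_apply,
      Fintype.sum_sum_type, S_Ah_ll, S_Ah_lr, S_bh_l, ih]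
    simp

/-- value of the extras -/
noncomputable def E (t : ℕ) (i : Fin 11) : ℝ := (S B R).hid x t (Sum.inr i)

lemma E_def (t i) : (S B R).hid x t (Sum.inr i) = E B R x t i := rfl

/-- the scalar output of the simulated R -/
noncomputable def Y (t : ℕ) : ℝ := R.out x t 0

lemma E0 (i : Fin 11) : E B R x 0 i = max 0 (bext B (R.bo 0) i) := by
  simp only [E, RNN.hid, relu, Matrix.mulVec, dotProduct, Pi.add_apply, S_Ax_r, S_bh_r]
  simp

lemma Estep (t : ℕ) (i : Fin 11) :
    E B R x (t+1) i
      = max 0 (simRead i * (Y R x t - R.bo 0) + (∑ j : Fin 11, W B i j * E B R x t j)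
          + bext B (R.bo 0) i) := by
  have hy : Y R x t - R.bo 0 = ∑ j, R.Ao 0 j * R.hid x t j := by
    simp only [Y, RNN.out, Pi.add_apply, Matrix.mulVec, dotProduct]
    ring
  conv_lhs => rw [E]
  simp only [RNN.hid, relu, Matrix.mulVec, dotProduct, Pi.add_apply,
    Fintype.sum_sum_type, S_Ah_rl, S_Ah_rr, S_bh_r, E_def]
  rw [hy, Finset.mul_sum]
  have : ∀ j, simRead i * R.Ao 0 j * (S B R).hid x t (Sum.inl j)
      = simRead i * (R.Ao 0 j * R.hid x t j) := fun j => by rw [sim, mul_assoc]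
  simp only [this]

lemma Sout (t : ℕ) :
    (S B R).out x t 0 = E B R x t 6 - E B R x t 7 + E B R x t 8 + E B R x t 9 - B := by
  simp only [RNN.out, Matrix.mulVec, dotProduct, Pi.add_apply,
    Fintype.sum_sum_type, S_Ao_l, S_Ao_r, S_bo, E_def]
  rw [sum11]
  simp only [W, simRead, bext, outRow, vecEval0, vecEval1, vecEval2, vecEval3, vecEval4, vecEval5, vecEval6, vecEval7, vecEval8, vecEval9, vecEval10, zero_mul, one_mul, mul_zero, add_zero, zero_add, mul_one, neg_mul, sub_zero, Finset.sum_const_zero, zero_add]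
  try ring

lemma Eo (t) : E B R x (t+1) 0 = 1 := by
  rw [Estep, sum11]
  simp only [W, simRead, bext, outRow, vecEval0, vecEval1, vecEval2, vecEval3, vecEval4, vecEval5, vecEval6, vecEval7, vecEval8, vecEval9, vecEval10, zero_mul, one_mul, mul_zero, add_zero, zero_add, mul_one, neg_mul, sub_zero]
  norm_num

lemma Eo0 : E B R x 0 0 = 1 := by
  rw [E0]; simp only [W, simRead, bext, outRow, vecEval0, vecEval1, vecEval2, vecEval3, vecEval4, vecEval5, vecEval6, vecEval7, vecEval8, vecEval9, vecEval10, zero_mul, one_mul, mul_zero, add_zero, zero_add, mul_one, neg_mul, sub_zero]; norm_num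

lemma o1 (t) : E B R x t 0 = 1 := by
  cases t with
  | zero => exact Eo0 B R x
  | succ t => exact Eo B R x t

lemma Ea (t) : E B R x (t+1) 1 = max 0 (E B R x t 1 / 2 - E B R x t 0 + 1) := by
  rw [Estep, sum11]
  simp only [W, simRead, bext, outRow, vecEval0, vecEval1, vecEval2, vecEval3, vecEval4, vecEval5, vecEval6, vecEval7, vecEval8, vecEval9, vecEval10, zero_mul, one_mul, mul_zero, add_zero, zero_add, mul_one, neg_mul, sub_zero]
  try (congr 1 <;> ring)

lemma Eu (t) : E B R x (t+1) 2
    = max 0 (2 * E B R x t 2 - 6 * E B R x t 3 + E B R x t 5 + 1/2 - E B R x t 0 / 2) := by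
  rw [Estep, sum11]
  simp only [W, simRead, bext, outRow, vecEval0, vecEval1, vecEval2, vecEval3, vecEval4, vecEval5, vecEval6, vecEval7, vecEval8, vecEval9, vecEval10, zero_mul, one_mul, mul_zero, add_zero, zero_add, mul_one, neg_mul, sub_zero]
  try (congr 1 <;> ring)

lemma Es (t) : E B R x (t+1) 3 = max 0 (2 * E B R x t 2 - 1) := by
  rw [Estep, sum11]
  simp only [W, simRead, bext, outRow, vecEval0, vecEval1, vecEval2, vecEval3, vecEval4, vecEval5, vecEval6, vecEval7, vecEval8, vecEval9, vecEval10, zero_mul, one_mul, mul_zero, add_zero, zero_add, mul_one, neg_mul, sub_zero]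
  try (congr 1 <;> ring)

lemma Es2 (t) : E B R x (t+1) 4 = max 0 (2 * E B R x t 2 - 2) := by
  rw [Estep, sum11]
  simp only [W, simRead, bext, outRow, vecEval0, vecEval1, vecEval2, vecEval3, vecEval4, vecEval5, vecEval6, vecEval7, vecEval8, vecEval9, vecEval10, zero_mul, one_mul, mul_zero, add_zero, zero_add, mul_one, neg_mul, sub_zero]
  try (congr 1 <;> ring)

lemma Ez (t) : E B R x (t+1) 5 = max 0 (8 * E B R x t 1 + 4 * E B R x t 4 - 8) := by
  rw [Estep, sum11]
  simp only [W, simRead, bext, outRow, vecEval0, vecEval1, vecEval2, vecEval3, vecEval4, vecEval5, vecEval6, vecEval7, vecEval8, vecEval9, vecEval10, zero_mul, one_mul, mul_zero, add_zero, zero_add, mul_one, neg_mul, sub_zero]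
  try (congr 1 <;> ring)

lemma Ev1 (t) : E B R x (t+1) 6
    = max 0 (Y R x t + B * E B R x t 3 - 3/2 * B * E B R x t 4) := by
  rw [Estep, sum11]
  simp only [W, simRead, bext, outRow, vecEval0, vecEval1, vecEval2, vecEval3, vecEval4, vecEval5, vecEval6, vecEval7, vecEval8, vecEval9, vecEval10, zero_mul, one_mul, mul_zero, add_zero, zero_add, mul_one, neg_mul, sub_zero]
  try (congr 1 <;> ring)

lemma Ev2 (t) : E B R x (t+1) 7
    = max 0 (Y R x t - B * E B R x t 3 + 3/2 * B * E B R x t 4) := by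
  rw [Estep, sum11]
  simp only [W, simRead, bext, outRow, vecEval0, vecEval1, vecEval2, vecEval3, vecEval4, vecEval5, vecEval6, vecEval7, vecEval8, vecEval9, vecEval10, zero_mul, one_mul, mul_zero, add_zero, zero_add, mul_one, neg_mul, sub_zero]
  try (congr 1 <;> ring)

lemma Ed2 (t) : E B R x (t+1) 8
    = max 0 (E B R x t 6 - E B R x t 7 + B * E B R x t 4 - 2 * B) := by
  rw [Estep, sum11]
  simp only [W, simRead, bext, outRow, vecEval0, vecEval1, vecEval2, vecEval3, vecEval4, vecEval5, vecEval6, vecEval7, vecEval8, vecEval9, vecEval10, zero_mul, one_mul, mul_zero, add_zero, zero_add, mul_one, neg_mul, sub_zero]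
  try (congr 1 <;> ring)

lemma EG (t) : E B R x (t+1) 9
    = max 0 (E B R x t 9 + E B R x t 8 - 2 * B * E B R x t 3 + 3 * B * E B R x t 4) := by
  rw [Estep, sum11]
  simp only [W, simRead, bext, outRow, vecEval0, vecEval1, vecEval2, vecEval3, vecEval4, vecEval5, vecEval6, vecEval7, vecEval8, vecEval9, vecEval10, zero_mul, one_mul, mul_zero, add_zero, zero_add, mul_one, neg_mul, sub_zero]
  try (congr 1 <;> ring)

lemma Ea0 : E B R x 0 1 = 1 := by
  rw [E0]; simp only [W, simRead, bext, outRow, vecEval0, vecEval1, vecEval2, vecEval3, vecEval4, vecEval5, vecEval6, vecEval7, vecEval8, vecEval9, vecEval10, zero_mul, one_mul, mul_zero, add_zero, zero_add, mul_one, neg_mul, sub_zero]; norm_num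
lemma Eu0 : E B R x 0 2 = 1/2 := by
  rw [E0]; simp only [W, simRead, bext, outRow, vecEval0, vecEval1, vecEval2, vecEval3, vecEval4, vecEval5, vecEval6, vecEval7, vecEval8, vecEval9, vecEval10, zero_mul, one_mul, mul_zero, add_zero, zero_add, mul_one, neg_mul, sub_zero]; norm_num
lemma Es0 : E B R x 0 3 = 0 := by
  rw [E0]; simp only [W, simRead, bext, outRow, vecEval0, vecEval1, vecEval2, vecEval3, vecEval4, vecEval5, vecEval6, vecEval7, vecEval8, vecEval9, vecEval10, zero_mul, one_mul, mul_zero, add_zero, zero_add, mul_one, neg_mul, sub_zero]; norm_num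
lemma Es20 : E B R x 0 4 = 0 := by
  rw [E0]; simp only [W, simRead, bext, outRow, vecEval0, vecEval1, vecEval2, vecEval3, vecEval4, vecEval5, vecEval6, vecEval7, vecEval8, vecEval9, vecEval10, zero_mul, one_mul, mul_zero, add_zero, zero_add, mul_one, neg_mul, sub_zero]; norm_num
lemma Ez0 : E B R x 0 5 = 0 := by
  rw [E0]; simp only [W, simRead, bext, outRow, vecEval0, vecEval1, vecEval2, vecEval3, vecEval4, vecEval5, vecEval6, vecEval7, vecEval8, vecEval9, vecEval10, zero_mul, one_mul, mul_zero, add_zero, zero_add, mul_one, neg_mul, sub_zero]; norm_num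
lemma Ev10 : E B R x 0 6 = max 0 (R.bo 0) := by rw [E0]; simp only [W, simRead, bext, outRow, vecEval0, vecEval1, vecEval2, vecEval3, vecEval4, vecEval5, vecEval6, vecEval7, vecEval8, vecEval9, vecEval10, zero_mul, one_mul, mul_zero, add_zero, zero_add, mul_one, neg_mul, sub_zero]
lemma Ev20 : E B R x 0 7 = max 0 (R.bo 0) := by rw [E0]; simp only [W, simRead, bext, outRow, vecEval0, vecEval1, vecEval2, vecEval3, vecEval4, vecEval5, vecEval6, vecEval7, vecEval8, vecEval9, vecEval10, zero_mul, one_mul, mul_zero, add_zero, zero_add, mul_one, neg_mul, sub_zero]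
lemma Ed20 (hB : 0 < B) : E B R x 0 8 = 0 := by
  rw [E0]; simp only [W, simRead, bext, outRow, vecEval0, vecEval1, vecEval2, vecEval3, vecEval4, vecEval5, vecEval6, vecEval7, vecEval8, vecEval9, vecEval10, zero_mul, one_mul, mul_zero, add_zero, zero_add, mul_one, neg_mul, sub_zero]
  rw [max_eq_left]; linarith
lemma EG0 : E B R x 0 9 = 0 := by
  rw [E0]; simp only [W, simRead, bext, outRow, vecEval0, vecEval1, vecEval2, vecEval3, vecEval4, vecEval5, vecEval6, vecEval7, vecEval8, vecEval9, vecEval10, zero_mul, one_mul, mul_zero, add_zero, zero_add, mul_one, neg_mul, sub_zero]; norm_num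

/-! ### helper lemmas -/

lemma Enonneg (t i) : 0 ≤ E B R x t i := by
  cases t with
  | zero => rw [E0]; exact le_max_left _ _
  | succ t => rw [Estep]; exact le_max_left _ _

lemma Eu' (t) : E B R x (t+1) 2
    = max 0 (2 * E B R x t 2 - 6 * E B R x t 3 + E B R x t 5) := by
  rw [Eu, o1]; congr 1; ring

lemma a_val (t) : E B R x t 1 = (1/2 : ℝ)^t := by
  induction t with
  | zero => rw [Ea0, pow_zero]
  | succ t ih =>
    rw [Ea, ih, o1]
    have h : (1/2:ℝ)^t/2 - 1 + 1 = (1/2)^(t+1) := by rw [pow_succ]; ring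
    rw [h, max_eq_right (by positivity)]

lemma s_zero {t} (h : E B R x t 2 ≤ 1/2) : E B R x (t+1) 3 = 0 := by
  rw [Es, max_eq_left (by linarith)]

lemma s_one {t} (h : E B R x t 2 = 1) : E B R x (t+1) 3 = 1 := by
  rw [Es, h]; norm_num

lemma s_three {t} (h : E B R x t 2 = 2) : E B R x (t+1) 3 = 3 := by
  rw [Es, h]; norm_num

lemma s2_zero {t} (h : E B R x t 2 ≤ 1) : E B R x (t+1) 4 = 0 := by
  rw [Es2, max_eq_left (by linarith)]

lemma s2_two {t} (h : E B R x t 2 = 2) : E B R x (t+1) 4 = 2 := by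
  rw [Es2, h]; norm_num

lemma z_zero {t} (h : E B R x t 4 = 0) : E B R x (t+1) 5 = 0 := by
  rw [Ez, h, a_val]
  have h1 : (1/2:ℝ)^t ≤ 1 := pow_le_one₀ (by norm_num) (by norm_num)
  rw [max_eq_left (by linarith)]

lemma z_val {t} (h : E B R x t 4 = 2) : E B R x (t+1) 5 = 8 * (1/2:ℝ)^t := by
  rw [Ez, h, a_val]
  have h1 : (0:ℝ) ≤ (1/2:ℝ)^t := by positivity
  rw [max_eq_right (by linarith)]; ring

/-! ### base values at small times -/

lemma u1 : E B R x 1 2 = 1 := by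
  rw [Eu' , Eu0, Es0, Ez0]; norm_num

lemma s_1 : E B R x 1 3 = 0 := s_zero B R x (by rw [Eu0])
lemma s2_1 : E B R x 1 4 = 0 := s2_zero B R x (by rw [Eu0]; norm_num)
lemma z_1 : E B R x 1 5 = 0 := z_zero B R x (Es20 B R x)

lemma u2 : E B R x 2 2 = 2 := by
  rw [Eu', u1, s_1, z_1]; norm_num

lemma s_2 : E B R x 2 3 = 1 := s_one B R x (u1 B R x)
lemma s2_2 : E B R x 2 4 = 0 := s2_zero B R x (by rw [u1])
lemma z_2 : E B R x 2 5 = 0 := z_zero B R x (s2_1 B R x)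

lemma u3 : E B R x 3 2 = 0 := by
  rw [Eu', u2, s_2, z_2]; norm_num

lemma s_3 : E B R x 3 3 = 3 := s_three B R x (u2 B R x)
lemma s2_3 : E B R x 3 4 = 2 := s2_two B R x (u2 B R x)
lemma z_3 : E B R x 3 5 = 0 := z_zero B R x (s2_2 B R x)

lemma u4 : E B R x 4 2 = 0 := by
  rw [Eu', u3, s_3, z_3]; norm_num

lemma s_4 : E B R x 4 3 = 0 := s_zero B R x (by rw [u3]; norm_num)
lemma s2_4 : E B R x 4 4 = 0 := s2_zero B R x (by rw [u3]; norm_num)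
lemma z_4 : E B R x 4 5 = 1 := by
  have h := z_val B R x (s2_3 B R x); rw [h]; norm_num

lemma u5 : E B R x 5 2 = 1 := by
  rw [Eu', u4, s_4, z_4]; norm_num

lemma s_5 : E B R x 5 3 = 0 := s_zero B R x (by rw [u4]; norm_num)
lemma s2_5 : E B R x 5 4 = 0 := s2_zero B R x (by rw [u4]; norm_num)
lemma z_5 : E B R x 5 5 = 0 := z_zero B R x (s2_4 B R x)

lemma u6 : E B R x 6 2 = 2 := by
  rw [Eu', u5, s_5, z_5]; norm_num

/-! ### arithmetic helpers -/

lemma two_pow_div_le_half {a b : ℕ} (h : a + 1 ≤ b) : (2:ℝ)^a / 2^b ≤ 1/2 := by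
  rw [div_le_div_iff₀ (by positivity) (by norm_num)]
  calc (2:ℝ)^a * 2 = 2^(a+1) := by rw [pow_succ]
    _ ≤ 2^b := by exact_mod_cast pow_le_pow_right₀ (by norm_num) h
    _ = 1 * 2^b := by ring

lemma two_pow_div_le_one {a b : ℕ} (h : a ≤ b) : (2:ℝ)^a / 2^b ≤ 1 := by
  rw [div_le_one (by positivity)]
  exact_mod_cast pow_le_pow_right₀ (by norm_num) h

lemma two_pow_div_pos {a b : ℕ} : (0:ℝ) < 2^a / 2^b := by positivity

/-! ### the timer -/

lemma timer : ∀ k, 2 ≤ k →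
    E B R x (2^k - 1) 2 = 0 ∧ E B R x (2^k) 2 = 0 ∧
    ∀ j, j + 3 ≤ 2^k → E B R x (2^k + 1 + j) 2 = 2^(j+4) / 2^(2^k) := by
  intro k hk
  induction k, hk using Nat.le_induction with
  | base =>
    refine ⟨by norm_num [u3], by norm_num [u4], ?_⟩
    intro j hj
    have hj2 : j = 0 ∨ j = 1 := by omega
    rcases hj2 with rfl | rfl
    · norm_num [u5]
    · norm_num [u6]
  | succ k hk ih =>
    obtain ⟨h1, h2, h3⟩ := ih
    have hM : 4 ≤ 2^k := by
      calc 4 = 2^2 := rfl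
      _ ≤ 2^k := Nat.pow_le_pow_right (by norm_num) hk
    obtain ⟨T, hT⟩ : ∃ T, 2 * 2^k = T + 4 := ⟨2 * 2^k - 4, by omega⟩
    have hTT : 2^(k+1) = T + 4 := by rw [pow_succ]; omega
    -- key values of u around the end of window k
    have uA : E B R x (T+2) 2 = 2 := by
      have h := h3 (2^k - 3) (by omega)
      rw [show 2^k + 1 + (2^k - 3) = T+2 by omega,
        show 2^k - 3 + 4 = 2^k + 1 by omega] at h
      rw [h, pow_succ, mul_comm, mul_div_assoc, div_self (by positivity), mul_one]
    have uB : E B R x (T+1) 2 = 1 := by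
      have h := h3 (2^k - 4) (by omega)
      rw [show 2^k + 1 + (2^k - 4) = T+1 by omega,
        show 2^k - 4 + 4 = 2^k by omega] at h
      rw [h, div_self (by positivity)]
    have uC : E B R x T 2 ≤ 1/2 := by
      rcases Nat.lt_or_ge (2^k) 5 with h5 | h5
      · rw [show T = 2^k by omega, h2]; norm_num
      · have h := h3 (2^k - 5) (by omega)
        rw [show 2^k + 1 + (2^k - 5) = T by omega] at h
        rw [h]
        exact two_pow_div_le_half (by omega)
    -- derived pulse signals
    have sA : E B R x (T+2) 3 = 1 := s_one B R x uB
    have s2A : E B R x (T+2) 4 = 0 := s2_zero B R x (by rw [uB])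
    have s2B : E B R x (T+1) 4 = 0 := s2_zero B R x (by linarith)
    have zA : E B R x (T+2) 5 = 0 := z_zero B R x s2B
    have uP3 : E B R x (T+3) 2 = 0 := by
      have h := Eu' B R x (T+2)
      rw [uA, sA, zA] at h
      rw [show T+2+1 = T+3 by omega] at h
      rw [h]; norm_num
    have sP3 : E B R x (T+3) 3 = 3 := by
      have h := s_three B R x uA; rwa [show T+2+1 = T+3 by omega] at h
    have s2P3 : E B R x (T+3) 4 = 2 := by
      have h := s2_two B R x uA; rwa [show T+2+1 = T+3 by omega] at h
    have zP3 : E B R x (T+3) 5 = 0 := by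
      have h := z_zero B R x s2A; rwa [show T+2+1 = T+3 by omega] at h
    have uP4 : E B R x (T+4) 2 = 0 := by
      have h := Eu' B R x (T+3)
      rw [uP3, sP3, zP3] at h
      rw [show T+3+1 = T+4 by omega] at h
      rw [h]; norm_num
    have sP4 : E B R x (T+4) 3 = 0 := by
      have h := s_zero B R x (by rw [uP3]; norm_num : E B R x (T+3) 2 ≤ 1/2)
      rwa [show T+3+1 = T+4 by omega] at h
    have zP4 : E B R x (T+4) 5 = 8 * (1/2:ℝ)^(T+3) := by
      have h := z_val B R x s2P3; rwa [show T+3+1 = T+4 by omega] at h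
    have uP5 : E B R x (T+5) 2 = 2^(0+4)/2^(T+4) := by
      have h := Eu' B R x (T+4)
      rw [uP4, sP4, zP4, show T+4+1 = T+5 by omega] at h
      have harg : (2:ℝ)*0 - 6*0 + 8*(1/2)^(T+3) = 2^(0+4)/2^(T+4) := by
        rw [show ((1:ℝ)/2)^(T+3) = 1/2^(T+3) by rw [div_pow, one_pow],
          show (T+4) = (T+3)+1 by omega, pow_succ]
        field_simp
        ring
      rw [h, harg, max_eq_right (by positivity)]
    -- the doubling phase, by strong induction
    have inner : ∀ j, j + 3 ≤ T + 4 → E B R x (T+5+j) 2 = 2^(j+4)/2^(T+4) := by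
      intro j
      induction j using Nat.strong_induction_on with
      | _ j IH =>
        intro hj
        match j with
        | 0 => exact uP5
        | (jj+1) =>
          have hu : E B R x (T+5+jj) 2 = 2^(jj+4)/2^(T+4) :=
            IH jj (by omega) (by omega)
          have hs : E B R x (T+5+jj) 3 = 0 := by
            match jj with
            | 0 =>
              have h := s_zero B R x (by rw [uP4] ; norm_num : E B R x (T+4) 2 ≤ 1/2)
              rwa [show T+4+1 = T+5+0 by omega] at h
            | (jj'+1) =>
              have hu' : E B R x (T+5+jj') 2 = 2^(jj'+4)/2^(T+4) :=
                IH jj' (by omega) (by omega)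
              have hle : E B R x (T+5+jj') 2 ≤ 1/2 := by
                rw [hu']; exact two_pow_div_le_half (by omega)
              have h := s_zero B R x hle
              rwa [show T+5+jj'+1 = T+5+(jj'+1) by omega] at h
          have hs2 : E B R x (T+4+jj) 4 = 0 := by
            match jj with
            | 0 =>
              have h := s2_zero B R x (by rw [uP3]; norm_num : E B R x (T+3) 2 ≤ 1)
              rwa [show T+3+1 = T+4+0 by omega] at h
            | 1 =>
              have h := s2_zero B R x (by rw [uP4]; norm_num : E B R x (T+4) 2 ≤ 1)
              rwa [show T+4+1 = T+4+1 by omega] at h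
            | (jj''+2) =>
              have hu'' : E B R x (T+5+jj'') 2 = 2^(jj''+4)/2^(T+4) :=
                IH jj'' (by omega) (by omega)
              have hle : E B R x (T+5+jj'') 2 ≤ 1 := by
                rw [hu'']; exact two_pow_div_le_one (by omega)
              have h := s2_zero B R x hle
              rwa [show T+5+jj''+1 = T+4+(jj''+2) by omega] at h
          have hz : E B R x (T+5+jj) 5 = 0 := by
            have h := z_zero B R x hs2
            rwa [show T+4+jj+1 = T+5+jj by omega] at h
          have h := Eu' B R x (T+5+jj)
          rw [hu, hs, hz, show T+5+jj+1 = T+5+(jj+1) by omega] at h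
          have harg : 2 * ((2:ℝ)^(jj+4)/2^(T+4)) - 6*0 + 0 = 2^(jj+1+4)/2^(T+4) := by
            rw [show (jj+1+4) = (jj+4)+1 by omega, pow_succ]; ring
          rw [h, harg, max_eq_right (by positivity)]
    refine ⟨?_, ?_, ?_⟩
    · rw [show 2^(k+1) - 1 = T+3 by omega]; exact uP3
    · rw [show 2^(k+1) = T+4 by omega]; exact uP4
    · intro j hj
      rw [show 2^(k+1) + 1 + j = T+5+j by omega, hTT]
      exact inner j (by omega)

/-! ### clipping helpers -/

noncomputable def clipB (B v : ℝ) : ℝ := max 0 (v + B) - max 0 (v - B)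

lemma clipB_nonneg (v : ℝ) (hB : 0 < B) : 0 ≤ clipB B v := by
  have : max 0 (v - B) ≤ max 0 (v + B) := max_le_max le_rfl (by linarith)
  unfold clipB; linarith

lemma clipB_le (v : ℝ) (hB : 0 < B) : clipB B v ≤ 2 * B := by
  have h1 : (0:ℝ) ≤ max 0 (v - B) := le_max_left _ _
  have h2 : v - B ≤ max 0 (v - B) := le_max_right _ _
  have : max 0 (v + B) ≤ max 0 (v - B) + 2 * B := max_le (by linarith) (by linarith)
  unfold clipB; linarith

lemma clipB_clip (v : ℝ) (hB : 0 < B) : clipB B v - B = clip v (-B) B := by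
  unfold clipB clip
  split_ifs with h1 h2
  · rw [max_eq_left (by linarith), max_eq_left (by linarith)]; ring
  · rw [max_eq_right (by linarith), max_eq_right (by linarith)]; ring
  · push_neg at h1 h2
    rw [max_eq_right (by linarith), max_eq_left (by linarith)]; ring

/-! ### sampler step lemmas -/

lemma v_pulse (t) (hs : E B R x t 3 = 1) (hs2 : E B R x t 4 = 0) :
    E B R x (t+1) 6 - E B R x (t+1) 7 = clipB B (Y R x t) := by
  rw [Ev1, Ev2, hs, hs2, clipB,
    show Y R x t + B*1 - 3/2*B*0 = Y R x t + B by ring,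
    show Y R x t - B*1 + 3/2*B*0 = Y R x t - B by ring]

lemma v_zero (t) (hs : E B R x t 3 = 0) (hs2 : E B R x t 4 = 0) :
    E B R x (t+1) 6 - E B R x (t+1) 7 = 0 := by
  rw [Ev1, Ev2, hs, hs2,
    show Y R x t + B*0 - 3/2*B*0 = Y R x t by ring,
    show Y R x t - B*0 + 3/2*B*0 = Y R x t by ring, sub_self]

lemma v_zero3 (t) (hs : E B R x t 3 = 3) (hs2 : E B R x t 4 = 2) :
    E B R x (t+1) 6 - E B R x (t+1) 7 = 0 := by
  rw [Ev1, Ev2, hs, hs2,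
    show Y R x t + B*3 - 3/2*B*2 = Y R x t by ring,
    show Y R x t - B*3 + 3/2*B*2 = Y R x t by ring, sub_self]

lemma v_0 : E B R x 0 6 - E B R x 0 7 = 0 := by
  rw [Ev10, Ev20, sub_self]

lemma d2_zero (t) (hv : E B R x t 6 - E B R x t 7 ≤ 2*B) (hs2 : E B R x t 4 = 0) :
    E B R x (t+1) 8 = 0 := by
  rw [Ed2, hs2, max_eq_left (by linarith)]

lemma d2_fill (t) (hv : 0 ≤ E B R x t 6 - E B R x t 7) (hs2 : E B R x t 4 = 2) :
    E B R x (t+1) 8 = E B R x t 6 - E B R x t 7 := by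
  rw [Ed2, hs2, show E B R x t 6 - E B R x t 7 + B*2 - 2*B
    = E B R x t 6 - E B R x t 7 by ring, max_eq_right hv]

/-! ### u values around the start of window k -/

lemma uwin (k) (hk : 2 ≤ k) :
    E B R x (2^k - 2) 2 = 2 ∧ E B R x (2^k - 3) 2 = 1 ∧ E B R x (2^k - 4) 2 ≤ 1/2 := by
  rcases eq_or_lt_of_le hk with rfl | hk3
  · norm_num [u2, u1, Eu0]
  · have hk' : 2 ≤ k - 1 := by omega
    obtain ⟨h1, h2, h3⟩ := timer B R x (k-1) hk'
    have hM : 4 ≤ 2^(k-1) := by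
      calc 4 = 2^2 := rfl
      _ ≤ 2^(k-1) := Nat.pow_le_pow_right (by norm_num) hk'
    have hkk : 2^k = 2 * 2^(k-1) := by
      rw [← pow_succ']
      congr 1
      omega
    refine ⟨?_, ?_, ?_⟩
    · have h := h3 (2^(k-1) - 3) (by omega)
      rw [show 2^(k-1) + 1 + (2^(k-1) - 3) = 2^k - 2 by omega,
        show 2^(k-1) - 3 + 4 = 2^(k-1) + 1 by omega] at h
      rw [h, pow_succ, mul_comm, mul_div_assoc, div_self (by positivity), mul_one]
    · have h := h3 (2^(k-1) - 4) (by omega)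
      rw [show 2^(k-1) + 1 + (2^(k-1) - 4) = 2^k - 3 by omega,
        show 2^(k-1) - 4 + 4 = 2^(k-1) by omega] at h
      rw [h, div_self (by positivity)]
    · rcases Nat.lt_or_ge (2^(k-1)) 5 with h5 | h5
      · rw [show 2^k - 4 = 2^(k-1) by omega, h2]; norm_num
      · have h := h3 (2^(k-1) - 5) (by omega)
        rw [show 2^(k-1) + 1 + (2^(k-1) - 5) = 2^k - 4 by omega] at h
        rw [h]
        exact two_pow_div_le_half (by omega)

lemma u_small (k) (hk : 2 ≤ k) :
    ∀ τ, 2^k - 1 ≤ τ → τ ≤ 2^(k+1) - 4 → E B R x τ 2 ≤ 1/2 := by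
  obtain ⟨h1, h2, h3⟩ := timer B R x k hk
  have hM : 4 ≤ 2^k := by
    calc 4 = 2^2 := rfl
    _ ≤ 2^k := Nat.pow_le_pow_right (by norm_num) hk
  have hp : 2^(k+1) = 2 * 2^k := by rw [pow_succ]; ring
  intro τ hlo hhi
  rcases Nat.lt_or_ge τ (2^k + 1) with hτ | hτ
  · rcases Nat.lt_or_ge τ (2^k) with hτ2 | hτ2
    · rw [show τ = 2^k - 1 by omega, h1]; norm_num
    · rw [show τ = 2^k by omega, h2]; norm_num
  · have h := h3 (τ - (2^k+1)) (by omega)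
    rw [show 2^k + 1 + (τ - (2^k+1)) = τ by omega] at h
    rw [h]
    exact two_pow_div_le_half (by omega)

lemma quiet (k) (hk : 2 ≤ k) :
    ∀ t, 2^k ≤ t → t ≤ 2^(k+1) - 3 → E B R x t 3 = 0 ∧ E B R x t 4 = 0 := by
  intro t ht1 ht2
  have hM : 4 ≤ 2^k := by
    calc 4 = 2^2 := rfl
    _ ≤ 2^k := Nat.pow_le_pow_right (by norm_num) hk
  have hu := u_small B R x k hk (t-1) (by omega) (by omega)
  have hs := s_zero B R x hu
  have hs2 := s2_zero B R x (by linarith)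
  rw [show t - 1 + 1 = t by omega] at hs hs2
  exact ⟨hs, hs2⟩

/-! ### per-window values of the sampling pipeline -/

lemma window (k) (hk : 2 ≤ k) (hB : 0 < B) :
    (E B R x (2^k-2) 6 - E B R x (2^k-2) 7 = 0) ∧
    (E B R x (2^k-1) 6 - E B R x (2^k-1) 7 = clipB B (Y R x (2^k-2))) ∧
    (E B R x (2^k) 6 - E B R x (2^k) 7 = 0) ∧
    E B R x (2^k-1) 8 = 0 ∧
    E B R x (2^k) 8 = clipB B (Y R x (2^k-2)) ∧
    (∀ t, 2^k+1 ≤ t → t ≤ 2^(k+1)-2 → E B R x t 6 - E B R x t 7 = 0) ∧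
    (∀ t, 2^k+1 ≤ t → t ≤ 2^(k+1)-2 → E B R x t 8 = 0) := by
  have hM : 4 ≤ 2^k := by
    calc 4 = 2^2 := rfl
    _ ≤ 2^k := Nat.pow_le_pow_right (by norm_num) hk
  have hp : 2^(k+1) = 2 * 2^k := by rw [pow_succ]; ring
  obtain ⟨wu1, wu2, wu3⟩ := uwin B R x k hk
  -- pulse signals
  have pA : E B R x (2^k-2) 3 = 1 := by
    have h := s_one B R x wu2; rwa [show 2^k-3+1 = 2^k-2 by omega] at h
  have pB : E B R x (2^k-2) 4 = 0 := by
    have h := s2_zero B R x (by rw [wu2] : E B R x (2^k-3) 2 ≤ 1)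
    rwa [show 2^k-3+1 = 2^k-2 by omega] at h
  have pC : E B R x (2^k-1) 3 = 3 := by
    have h := s_three B R x wu1; rwa [show 2^k-2+1 = 2^k-1 by omega] at h
  have pD : E B R x (2^k-1) 4 = 2 := by
    have h := s2_two B R x wu1; rwa [show 2^k-2+1 = 2^k-1 by omega] at h
  have pE : E B R x (2^k-3) 3 = 0 := by
    have h := s_zero B R x wu3; rwa [show 2^k-4+1 = 2^k-3 by omega] at h
  have pF : E B R x (2^k-3) 4 = 0 := by
    have h := s2_zero B R x (by linarith : E B R x (2^k-4) 2 ≤ 1)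
    rwa [show 2^k-4+1 = 2^k-3 by omega] at h
  -- vdiff values
  have w1 : E B R x (2^k-2) 6 - E B R x (2^k-2) 7 = 0 := by
    have h := v_zero B R x _ pE pF; rwa [show 2^k-3+1 = 2^k-2 by omega] at h
  have w2 : E B R x (2^k-1) 6 - E B R x (2^k-1) 7 = clipB B (Y R x (2^k-2)) := by
    have h := v_pulse B R x _ pA pB; rwa [show 2^k-2+1 = 2^k-1 by omega] at h
  have w3 : E B R x (2^k) 6 - E B R x (2^k) 7 = 0 := by
    have h := v_zero3 B R x _ pC pD; rwa [show 2^k-1+1 = 2^k by omega] at h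
  have w4 : E B R x (2^k-1) 8 = 0 := by
    have h := d2_zero B R x _ (by rw [w1]; linarith) pB
    rwa [show 2^k-2+1 = 2^k-1 by omega] at h
  have w5 : E B R x (2^k) 8 = clipB B (Y R x (2^k-2)) := by
    have h := d2_fill B R x _ (by rw [w2]; exact clipB_nonneg B _ hB) pD
    rw [show 2^k-1+1 = 2^k by omega, w2] at h
    exact h
  have w6 : ∀ t, 2^k+1 ≤ t → t ≤ 2^(k+1)-2 → E B R x t 6 - E B R x t 7 = 0 := by
    intro t ht1 ht2
    obtain ⟨hq1, hq2⟩ := quiet B R x k hk (t-1) (by omega) (by omega)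
    have h := v_zero B R x _ hq1 hq2
    rwa [show t-1+1 = t by omega] at h
  refine ⟨w1, w2, w3, w4, w5, w6, ?_⟩
  intro t ht1 ht2
  obtain ⟨hq1, hq2⟩ := quiet B R x k hk (t-1) (by omega) (by omega)
  have hvprev : E B R x (t-1) 6 - E B R x (t-1) 7 ≤ 2*B := by
    rcases Nat.lt_or_ge (t-1) (2^k+1) with hc | hc
    · rw [show t-1 = 2^k by omega, w3]; linarith
    · rw [w6 (t-1) hc (by omega)]; linarith
  have h := d2_zero B R x _ hvprev hq2
  rwa [show t-1+1 = t by omega] at h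

/-! ### pulses (standalone) -/

lemma pulses (k) (hk : 2 ≤ k) :
    E B R x (2^k-2) 3 = 1 ∧ E B R x (2^k-2) 4 = 0 ∧
    E B R x (2^k-1) 3 = 3 ∧ E B R x (2^k-1) 4 = 2 := by
  have hM : 4 ≤ 2^k := by
    calc 4 = 2^2 := rfl
    _ ≤ 2^k := Nat.pow_le_pow_right (by norm_num) hk
  obtain ⟨wu1, wu2, _⟩ := uwin B R x k hk
  refine ⟨?_, ?_, ?_, ?_⟩
  · have h := s_one B R x wu2; rwa [show 2^k-3+1 = 2^k-2 by omega] at h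
  · have h := s2_zero B R x (by rw [wu2] : E B R x (2^k-3) 2 ≤ 1)
    rwa [show 2^k-3+1 = 2^k-2 by omega] at h
  · have h := s_three B R x wu1; rwa [show 2^k-2+1 = 2^k-1 by omega] at h
  · have h := s2_two B R x wu1; rwa [show 2^k-2+1 = 2^k-1 by omega] at h

/-! ### small-time values of the sampling pipeline -/

lemma vd_1 : E B R x 1 6 - E B R x 1 7 = 0 := v_zero B R x 0 (Es0 B R x) (Es20 B R x)
lemma vd_2 : E B R x 2 6 - E B R x 2 7 = 0 := v_zero B R x 1 (s_1 B R x) (s2_1 B R x)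
lemma vd_3 : E B R x 3 6 - E B R x 3 7 = clipB B (Y R x 2) :=
  v_pulse B R x 2 (s_2 B R x) (s2_2 B R x)
lemma vd_4 : E B R x 4 6 - E B R x 4 7 = 0 := v_zero3 B R x 3 (s_3 B R x) (s2_3 B R x)

lemma d2_1 (hB : 0 < B) : E B R x 1 8 = 0 :=
  d2_zero B R x 0 (by rw [v_0]; linarith) (Es20 B R x)
lemma d2_2 (hB : 0 < B) : E B R x 2 8 = 0 :=
  d2_zero B R x 1 (by rw [vd_1]; linarith) (s2_1 B R x)
lemma d2_3 (hB : 0 < B) : E B R x 3 8 = 0 :=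
  d2_zero B R x 2 (by rw [vd_2]; linarith) (s2_2 B R x)
lemma d2_4 (hB : 0 < B) : E B R x 4 8 = clipB B (Y R x 2) := by
  have h := d2_fill B R x 3 (by rw [vd_3 B R x]; exact clipB_nonneg B _ hB) (s2_3 B R x)
  rw [h, vd_3]
lemma d2_5 (hB : 0 < B) : E B R x 5 8 = 0 :=
  d2_zero B R x 4 (by rw [vd_4]; linarith) (s2_4 B R x)

lemma G_1 (hB : 0 < B) : E B R x 1 9 = 0 := by
  rw [EG, EG0, Ed20 B R x hB, Es0, Es20]; norm_num
lemma G_2 (hB : 0 < B) : E B R x 2 9 = 0 := by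
  rw [EG, G_1 B R x hB, d2_1 B R x hB, s_1, s2_1]; norm_num
lemma G_3 (hB : 0 < B) : E B R x 3 9 = 0 := by
  rw [EG, G_2 B R x hB, d2_2 B R x hB, s_2, s2_2]
  rw [show (0:ℝ) + 0 - 2*B*1 + 3*B*0 = -(2*B) by ring, max_eq_left (by linarith)]
lemma G_4 (hB : 0 < B) : E B R x 4 9 = 0 := by
  rw [EG, G_3 B R x hB, d2_3 B R x hB, s_3, s2_3]
  rw [show (0:ℝ) + 0 - 2*B*3 + 3*B*2 = 0 by ring, max_self]
lemma G_5 (hB : 0 < B) : E B R x 5 9 = clipB B (Y R x 2) := by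
  rw [EG, G_4 B R x hB, d2_4 B R x hB, s_4, s2_4]
  rw [show (0:ℝ) + clipB B (Y R x 2) - 2*B*0 + 3*B*0 = clipB B (Y R x 2) by ring,
    max_eq_right (clipB_nonneg B _ hB)]
lemma G_6 (hB : 0 < B) : E B R x 6 9 = clipB B (Y R x 2) := by
  rw [EG, G_5 B R x hB, d2_5 B R x hB, s_5, s2_5]
  rw [show clipB B (Y R x 2) + 0 - 2*B*0 + 3*B*0 = clipB B (Y R x 2) by ring,
    max_eq_right (clipB_nonneg B _ hB)]

/-! ### the hold register -/

lemma hold (hB : 0 < B) : ∀ k, 2 ≤ k →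
    E B R x (2^k-1) 9 = 0 ∧ E B R x (2^k) 9 = 0 ∧
    ∀ t, 2^k+1 ≤ t → t ≤ 2^(k+1)-2 → E B R x t 9 = clipB B (Y R x (2^k-2)) := by
  intro k hk
  induction k, hk using Nat.le_induction with
  | base =>
    refine ⟨by norm_num [G_3 B R x hB], by norm_num [G_4 B R x hB], ?_⟩
    intro t ht1 ht2
    norm_num at ht1 ht2
    have : t = 5 ∨ t = 6 := by omega
    rcases this with rfl | rfl
    · norm_num [G_5 B R x hB]
    · norm_num [G_6 B R x hB]
  | succ k hk ih =>
    obtain ⟨g1, g2, g3⟩ := ih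
    have hM : 4 ≤ 2^k := by
      calc 4 = 2^2 := rfl
      _ ≤ 2^k := Nat.pow_le_pow_right (by norm_num) hk
    have hp : 2^(k+1) = 2 * 2^k := by rw [pow_succ]; ring
    have hp2 : 2^(k+2) = 2 * 2^(k+1) := by rw [pow_succ]; ring
    obtain ⟨_, _, _, _, _, _, w7⟩ := window B R x k hk hB
    obtain ⟨_, _, _, v4, v5, _, v7⟩ := window B R x (k+1) (by omega) hB
    obtain ⟨pA, pB, pC, pD⟩ := pulses B R x (k+1) (by omega)
    have GA : E B R x (2^(k+1)-1) 9 = 0 := by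
      have hg := g3 (2^(k+1)-2) (by omega) (by omega)
      have hd := w7 (2^(k+1)-2) (by omega) (by omega)
      have h := EG B R x (2^(k+1)-2)
      rw [hg, hd, pA, pB, show 2^(k+1)-2+1 = 2^(k+1)-1 by omega] at h
      rw [h, show clipB B (Y R x (2^k-2)) + 0 - 2*B*1 + 3*B*0
        = clipB B (Y R x (2^k-2)) - 2*B by ring]
      rw [max_eq_left (by linarith [clipB_le B (Y R x (2^k-2)) hB])]
    have GB : E B R x (2^(k+1)) 9 = 0 := by
      have h := EG B R x (2^(k+1)-1)
      rw [GA, v4, pC, pD, show 2^(k+1)-1+1 = 2^(k+1) by omega] at h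
      rw [h, show (0:ℝ) + 0 - 2*B*3 + 3*B*2 = 0 by ring, max_self]
    have GC : E B R x (2^(k+1)+1) 9 = clipB B (Y R x (2^(k+1)-2)) := by
      obtain ⟨hq1, hq2⟩ := quiet B R x (k+1) (by omega) (2^(k+1)) (by omega) (by omega)
      have h := EG B R x (2^(k+1))
      rw [GB, v5, hq1, hq2] at h
      rw [h, show (0:ℝ) + clipB B (Y R x (2^(k+1)-2)) - 2*B*0 + 3*B*0
        = clipB B (Y R x (2^(k+1)-2)) by ring,
        max_eq_right (clipB_nonneg B _ hB)]
    refine ⟨GA, GB, ?_⟩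
    intro t ht1
    induction t, ht1 using Nat.le_induction with
    | base => intro _; exact GC
    | succ t ht iht =>
      intro ht2
      have hGt := iht (by omega)
      obtain ⟨hq1, hq2⟩ := quiet B R x (k+1) (by omega) t (by omega) (by omega)
      have hd := v7 t (by omega) (by omega)
      have h := EG B R x t
      rw [hGt, hd, hq1, hq2] at h
      rw [h, show clipB B (Y R x (2^(k+1)-2)) + 0 - 2*B*0 + 3*B*0
        = clipB B (Y R x (2^(k+1)-2)) by ring,
        max_eq_right (clipB_nonneg B _ hB)]

/-! ### the output -/

lemma Sout_clip (hB : 0 < B) (k : ℕ) (hk : 2 ≤ k) (l : ℕ) (hl : l ≤ 2^k - 1) :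
    (S B R).out x (2^k - 1 + l) 0 = clip (Y R x (2^k-2)) (-B) B := by
  have hM : 4 ≤ 2^k := by
    calc 4 = 2^2 := rfl
    _ ≤ 2^k := Nat.pow_le_pow_right (by norm_num) hk
  have hp : 2^(k+1) = 2 * 2^k := by rw [pow_succ]; ring
  obtain ⟨w1, w2, w3, w4, w5, w6, w7⟩ := window B R x k hk hB
  obtain ⟨h1, h2, h3⟩ := hold B R x hB k hk
  have hcl := clipB_clip B (Y R x (2^k-2)) hB
  rcases Nat.lt_or_ge l 2 with hl2 | hl2
  · rcases Nat.lt_or_ge l 1 with hl1 | hl1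
    · have hl0 : l = 0 := by omega
      subst hl0
      rw [show 2^k - 1 + 0 = 2^k - 1 by omega, Sout]
      have hv := w2
      linarith [hv, w4, h1]
    · have hl1' : l = 1 := by omega
      subst hl1'
      rw [show 2^k - 1 + 1 = 2^k by omega, Sout]
      linarith [w3, w5, h2]
  · have ht1 : 2^k + 1 ≤ 2^k - 1 + l := by omega
    have ht2 : 2^k - 1 + l ≤ 2^(k+1) - 2 := by omega
    rw [Sout]
    linarith [w6 _ ht1 ht2, w7 _ ht1 ht2, h3 _ ht1 ht2]

/-! ### transport along an equivalence of the hidden index type -/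

noncomputable def tr {κ κ' : Type} (e : κ ≃ κ') (P : RNN (Fin din) κ (Fin 1)) :
    RNN (Fin din) κ' (Fin 1) where
  Ah := fun i j => P.Ah (e.symm i) (e.symm j)
  Ax := fun i j => P.Ax (e.symm i) j
  Ao := fun o j => P.Ao o (e.symm j)
  bh := fun i => P.bh (e.symm i)
  bo := P.bo

@[simp] lemma tr_Ah {κ κ' : Type} (e : κ ≃ κ') (P : RNN (Fin din) κ (Fin 1)) (i j) :
    (tr e P).Ah i j = P.Ah (e.symm i) (e.symm j) := rfl
@[simp] lemma tr_Ax {κ κ' : Type} (e : κ ≃ κ') (P : RNN (Fin din) κ (Fin 1)) (i j) :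
    (tr e P).Ax i j = P.Ax (e.symm i) j := rfl
@[simp] lemma tr_Ao {κ κ' : Type} (e : κ ≃ κ') (P : RNN (Fin din) κ (Fin 1)) (o j) :
    (tr e P).Ao o j = P.Ao o (e.symm j) := rfl
@[simp] lemma tr_bh {κ κ' : Type} (e : κ ≃ κ') (P : RNN (Fin din) κ (Fin 1)) (i) :
    (tr e P).bh i = P.bh (e.symm i) := rfl
@[simp] lemma tr_bo {κ κ' : Type} (e : κ ≃ κ') (P : RNN (Fin din) κ (Fin 1)) (o) :
    (tr e P).bo o = P.bo o := rfl

lemma tr_hid {κ κ' : Type} [Fintype κ] [Fintype κ'] (e : κ ≃ κ')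
    (P : RNN (Fin din) κ (Fin 1)) (x : Fin din → ℝ) :
    ∀ t, (tr e P).hid x t = fun i => P.hid x t (e.symm i) := by
  intro t
  induction t with
  | zero =>
    funext i
    simp only [RNN.hid, relu, Matrix.mulVec, dotProduct, Pi.add_apply, tr_Ax, tr_bh]
  | succ t ih =>
    funext i
    simp only [RNN.hid, relu, Matrix.mulVec, dotProduct, Pi.add_apply, tr_Ah, tr_bh, ih]
    congr 1
    congr 1
    exact Equiv.sum_comp e.symm (fun j => P.Ah (e.symm i) j * P.hid x t j)

lemma tr_out {κ κ' : Type} [Fintype κ] [Fintype κ'] (e : κ ≃ κ')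
    (P : RNN (Fin din) κ (Fin 1)) (x : Fin din → ℝ) (t : ℕ) (o : Fin 1) :
    (tr e P).out x t o = P.out x t o := by
  simp only [RNN.out, Matrix.mulVec, dotProduct, Pi.add_apply, tr_Ao, tr_bo, tr_hid]
  congr 1
  exact Equiv.sum_comp e.symm (fun j => P.Ao o j * P.hid x t j)

end Stmt18Aux


theorem stmt18 (B : ℝ) (hB : 0 < B) (din mh : ℕ)
    (R : RNN (Fin din) (Fin mh) (Fin 1)) :
    ∃ R' : RNN (Fin din) (Fin (mh + 11)) (Fin 1),
      ∀ x : Fin din → ℝ, ∀ k : ℕ, 2 ≤ k → ∀ l : ℕ, l ≤ 2 ^ k - 1 →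
        R'.out x (2 ^ k - 1 + l) 0 = clip (R.out x (2 ^ k - 2) 0) (-B) B := by
  refine ⟨Stmt18Aux.tr finSumFinEquiv (Stmt18Aux.S B R), ?_⟩
  intro x k hk l hl
  rw [Stmt18Aux.tr_out]
  exact Stmt18Aux.Sout_clip B R x hB k hk l hl
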